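/- Let K be a complete non-archimedean valued field, r ∈ (ℝ>0)ⁿ, and f ∈ K{r⁻¹T} nonzero. Then the set 𝓘(f) of multi-indices I ∈ ℤ≥0ⁿ for which there exists s with 0 < sᵢ ≤ rᵢ for all i such that |a_I| s^I equals the Gauss norm of f in K{s⁻¹T} is finite. In particular, the set of values ord_{K{s⁻¹T}}(f) as s ranges over ∏(0, rᵢ] is finite. -/

import Mathlib

open Filter

open Filter

/-- Membership in the polydisc algebra `K{r⁻¹T}`: the power series `f` has coefficients
with `‖a_I‖ · r^I → 0`. -/
def MemPolydisc {K : Type*} [NormedField K] {n : ℕ} (r : Fin n → ℝ)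
    (f : MvPowerSeries (Fin n) K) : Prop :=
  Tendsto (fun I : Fin n →₀ ℕ => ‖MvPowerSeries.coeff I f‖ * ∏ i, r i ^ I i)
    cofinite (nhds 0)

/-- The Gauss norm `‖∑ a_I T^I‖ = sup_I ‖a_I‖ r^I` on the polydisc algebra. -/
noncomputable def gaussNorm {K : Type*} [NormedField K] {n : ℕ} (r : Fin n → ℝ)
    (f : MvPowerSeries (Fin n) K) : ℝ :=
  ⨆ I : Fin n →₀ ℕ, ‖MvPowerSeries.coeff I f‖ * ∏ i, r i ^ I i

/-- `ord(f)`: the maximal total degree `|I|` among multi-indices `I` with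
`‖a_I‖ r^I = ‖f‖` (Gauss norm). -/
noncomputable def polyOrd {K : Type*} [NormedField K] {n : ℕ} (r : Fin n → ℝ)
    (f : MvPowerSeries (Fin n) K) : ℕ :=
  sSup {d : ℕ | ∃ I : Fin n →₀ ℕ, (I.sum fun _ k => k) = d ∧
    ‖MvPowerSeries.coeff I f‖ * ∏ i, r i ^ I i = gaussNorm r f}

section Aux

variable {K : Type*} [NormedField K] {n : ℕ}

/-- abbreviation for the term `‖a_I‖ s^I`. -/
noncomputable def vterm (f : MvPowerSeries (Fin n) K) (s : Fin n → ℝ) (I : Fin n →₀ ℕ) : ℝ :=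
  ‖MvPowerSeries.coeff I f‖ * ∏ i, s i ^ I i

lemma vterm_nonneg (f : MvPowerSeries (Fin n) K) {s : Fin n → ℝ} (hs : ∀ i, 0 ≤ s i)
    (I : Fin n →₀ ℕ) : 0 ≤ vterm f s I :=
  mul_nonneg (norm_nonneg _) (Finset.prod_nonneg fun i _ => pow_nonneg (hs i) _)

lemma vterm_mono (f : MvPowerSeries (Fin n) K) {r s : Fin n → ℝ}
    (hs : ∀ i, 0 < s i ∧ s i ≤ r i) (I : Fin n →₀ ℕ) : vterm f s I ≤ vterm f r I :=
  mul_le_mul_of_nonneg_left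
    (Finset.prod_le_prod (fun i _ => pow_nonneg (hs i).1.le _)
      (fun i _ => pow_le_pow_left₀ (hs i).1.le (hs i).2 _)) (norm_nonneg _)

lemma memPolydisc_of_le {r s : Fin n → ℝ} (hs : ∀ i, 0 < s i ∧ s i ≤ r i)
    {f : MvPowerSeries (Fin n) K} (hf : MemPolydisc r f) :
    Tendsto (vterm f s) cofinite (nhds 0) := by
  refine tendsto_of_tendsto_of_tendsto_of_le_of_le tendsto_const_nhds hf
    (fun I => vterm_nonneg f (fun i => (hs i).1.le) I) (fun I => vterm_mono f hs I)

lemma gaussNorm_eq_iSup (f : MvPowerSeries (Fin n) K) (s : Fin n → ℝ) :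
    gaussNorm s f = ⨆ I, vterm f s I := rfl

lemma le_gaussNorm {r s : Fin n → ℝ} (hs : ∀ i, 0 < s i ∧ s i ≤ r i)
    {f : MvPowerSeries (Fin n) K} (hf : MemPolydisc r f) (I : Fin n →₀ ℕ) :
    vterm f s I ≤ gaussNorm s f :=
  le_ciSup (memPolydisc_of_le hs hf).bddAbove_range_of_cofinite I

lemma exists_coeff_ne_zero {f : MvPowerSeries (Fin n) K} (hf0 : f ≠ 0) :
    ∃ J, MvPowerSeries.coeff J f ≠ 0 := by
  by_contra h
  push_neg at h
  exact hf0 (MvPowerSeries.ext fun J => by simp [h J])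

lemma gaussNorm_pos {r s : Fin n → ℝ} (hs : ∀ i, 0 < s i ∧ s i ≤ r i)
    {f : MvPowerSeries (Fin n) K} (hf0 : f ≠ 0) (hf : MemPolydisc r f) :
    0 < gaussNorm s f := by
  obtain ⟨J, hJ⟩ := exists_coeff_ne_zero hf0
  refine lt_of_lt_of_le ?_ (le_gaussNorm hs hf J)
  exact mul_pos (norm_pos_iff.mpr hJ)
    (Finset.prod_pos fun i _ => pow_pos (hs i).1 _)

/-- finiteness of superlevel sets of a function tending to 0 cofinitely. -/
lemma finite_level {α : Type*} {g : α → ℝ} (hg : Tendsto g cofinite (nhds 0))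
    {ε : ℝ} (hε : 0 < ε) : {I : α | ε ≤ g I}.Finite := by
  have h := Filter.eventually_cofinite.mp (hg.eventually_lt_const hε)
  exact h.subset fun I hI => not_lt.mpr hI

/-- the key monotonicity: if `I ≤ I'` componentwise and `I'` attains the Gauss norm
at some `s ≤ r`, then `‖a_I‖ r^I ≤ ‖a_{I'}‖ r^{I'}`. -/
lemma vterm_le_of_le {r s : Fin n → ℝ} (hs : ∀ i, 0 < s i ∧ s i ≤ r i)
    {f : MvPowerSeries (Fin n) K} (hf : MemPolydisc r f)
    {I I' : Fin n →₀ ℕ} (hII' : ∀ i, I i ≤ I' i)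
    (hatt : vterm f s I' = gaussNorm s f) :
    vterm f r I ≤ vterm f r I' := by
  have hA : vterm f s I ≤ vterm f s I' := hatt ▸ le_gaussNorm hs hf I
  have hB : (∏ i, s i ^ I' i) * ∏ i, r i ^ I i ≤ (∏ i, r i ^ I' i) * ∏ i, s i ^ I i := by
    rw [← Finset.prod_mul_distrib, ← Finset.prod_mul_distrib]
    refine Finset.prod_le_prod (fun i _ => mul_nonneg (pow_nonneg (hs i).1.le _)
      (pow_nonneg ((hs i).1.trans_le (hs i).2).le _)) ?_
    intro i _
    obtain ⟨k, hk⟩ := Nat.exists_eq_add_of_le (hII' i)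
    have h1 : (0:ℝ) < s i := (hs i).1
    have h2 : s i ≤ r i := (hs i).2
    calc s i ^ I' i * r i ^ I i = s i ^ k * (s i ^ I i * r i ^ I i) := by
          rw [hk, pow_add]; ring
      _ ≤ r i ^ k * (s i ^ I i * r i ^ I i) := by
          refine mul_le_mul_of_nonneg_right (pow_le_pow_left₀ h1.le h2 k) ?_
          exact mul_nonneg (pow_nonneg h1.le _) (pow_nonneg (h1.trans_le h2).le _)
      _ = r i ^ I' i * s i ^ I i := by rw [hk, pow_add]; ring
  have hP : 0 < ∏ i, s i ^ I' i := Finset.prod_pos fun i _ => pow_pos (hs i).1 _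
  refine le_of_mul_le_mul_right ?_ hP
  calc vterm f r I * ∏ i, s i ^ I' i
      = ‖MvPowerSeries.coeff I f‖ * ((∏ i, s i ^ I' i) * ∏ i, r i ^ I i) := by
        unfold vterm; ring
    _ ≤ ‖MvPowerSeries.coeff I f‖ * ((∏ i, r i ^ I' i) * ∏ i, s i ^ I i) :=
        mul_le_mul_of_nonneg_left hB (norm_nonneg _)
    _ = (vterm f s I) * ∏ i, r i ^ I' i := by unfold vterm; ring
    _ ≤ (vterm f s I') * ∏ i, r i ^ I' i := by
        refine mul_le_mul_of_nonneg_right hA (Finset.prod_nonneg fun i _ =>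
          pow_nonneg ((hs i).1.trans_le (hs i).2).le _)
    _ = vterm f r I' * ∏ i, s i ^ I' i := by unfold vterm; ring

/-- existence of a norm-attaining index. -/
lemma exists_attaining {r s : Fin n → ℝ} (hs : ∀ i, 0 < s i ∧ s i ≤ r i)
    {f : MvPowerSeries (Fin n) K} (hf0 : f ≠ 0) (hf : MemPolydisc r f) :
    ∃ I, vterm f s I = gaussNorm s f := by
  obtain ⟨J₀, hJ₀⟩ := exists_coeff_ne_zero hf0
  have hg : Tendsto (vterm f s) cofinite (nhds 0) := memPolydisc_of_le hs hf
  have hJ₀pos : 0 < vterm f s J₀ :=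
    mul_pos (norm_pos_iff.mpr hJ₀) (Finset.prod_pos fun i _ => pow_pos (hs i).1 _)
  have hT : {I | vterm f s J₀ ≤ vterm f s I}.Finite := finite_level hg hJ₀pos
  have hTne : (hT.toFinset).Nonempty := ⟨J₀, by simp⟩
  obtain ⟨I₀, hI₀mem, hI₀max⟩ := hT.toFinset.exists_max_image (vterm f s) hTne
  refine ⟨I₀, le_antisymm (le_gaussNorm hs hf I₀) ?_⟩
  rw [gaussNorm_eq_iSup]
  refine ciSup_le fun J => ?_
  by_cases hJ : vterm f s J₀ ≤ vterm f s J
  · exact hI₀max J (by simpa using hJ)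
  · have : vterm f s J₀ ≤ vterm f s I₀ := by simpa using hT.mem_toFinset.mp hI₀mem
    exact ((not_le.mp hJ).le.trans this)

end Aux

/-- For a nonzero element `f` of the polydisc algebra `K{r⁻¹T}`, the set `𝓘(f)` of
multi-indices `I` for which there is a polyradius `s` with `0 < sᵢ ≤ rᵢ` such that
`‖a_I‖ s^I` attains the Gauss norm of `f` in `K{s⁻¹T}` is finite; in particular the set
of values `ord_{K{s⁻¹T}}(f)` for `s ∈ ∏ (0, rᵢ]` is finite. -/
theorem finite_norm_attaining_indices {K : Type*} [NormedField K] [IsUltrametricDist K]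
    [CompleteSpace K] {n : ℕ} (r : Fin n → ℝ) (hr : ∀ i, 0 < r i)
    (f : MvPowerSeries (Fin n) K) (hf0 : f ≠ 0) (hf : MemPolydisc r f) :
    ({I : Fin n →₀ ℕ | ∃ s : Fin n → ℝ, (∀ i, 0 < s i ∧ s i ≤ r i) ∧
        ‖MvPowerSeries.coeff I f‖ * ∏ i, s i ^ I i = gaussNorm s f}).Finite ∧
    ({d : ℕ | ∃ s : Fin n → ℝ, (∀ i, 0 < s i ∧ s i ≤ r i) ∧ polyOrd s f = d}).Finite := by
  set S : Set (Fin n →₀ ℕ) := {I : Fin n →₀ ℕ | ∃ s : Fin n → ℝ,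
      (∀ i, 0 < s i ∧ s i ≤ r i) ∧
      ‖MvPowerSeries.coeff I f‖ * ∏ i, s i ^ I i = gaussNorm s f} with hSdef
  -- membership in S gives monotone comparison at r
  have hmem : ∀ I ∈ S, ∀ I' ∈ S, (∀ i, I i ≤ I' i) → vterm f r I ≤ vterm f r I' := by
    rintro I hI I' ⟨s', hs', hatt'⟩ hle
    exact vterm_le_of_le hs' hf hle hatt'
  have hpos : ∀ I ∈ S, 0 < vterm f r I := by
    rintro I ⟨s, hs, hatt⟩
    have h1 : 0 < vterm f s I := by
      show 0 < ‖MvPowerSeries.coeff I f‖ * ∏ i, s i ^ I i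
      rw [hatt]; exact gaussNorm_pos hs hf0 hf
    exact h1.trans_le (vterm_mono f hs I)
  have h1 : S.Finite := by
    by_contra hinf
    have hinf' : S.Infinite := hinf
    set e := hinf'.natEmbedding S with he
    have humem : ∀ k : ℕ, (e k : Fin n →₀ ℕ) ∈ S := fun k => (e k).2
    obtain ⟨g, hg⟩ := (Set.isPWO_of_wellQuasiOrderedLE S).exists_monotone_subseq
      (f := fun k => (e k : Fin n →₀ ℕ)) humem
    set u : ℕ → (Fin n →₀ ℕ) := fun k => (e (g k) : Fin n →₀ ℕ) with hu
    have huinj : Function.Injective u := by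
      intro a b hab
      exact g.injective (e.injective (Subtype.ext hab))
    have humem' : ∀ k, u k ∈ S := fun k => humem (g k)
    have hmono : ∀ k, u 0 ≤ u k := fun k => hg (Nat.zero_le k)
    have hε : 0 < vterm f r (u 0) := hpos _ (humem' 0)
    have hlevel : {I | vterm f r (u 0) ≤ vterm f r I}.Finite := finite_level hf hε
    have hall : ∀ k, u k ∈ {I | vterm f r (u 0) ≤ vterm f r I} := fun k =>
      hmem _ (humem' 0) _ (humem' k) (fun i => Finsupp.le_def.mp (hmono k) i)
    exact Set.infinite_of_injective_forall_mem huinj hall hlevel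
  refine ⟨h1, ?_⟩
  have hsub : {d : ℕ | ∃ s : Fin n → ℝ, (∀ i, 0 < s i ∧ s i ≤ r i) ∧ polyOrd s f = d} ⊆
      (fun I : Fin n →₀ ℕ => I.sum fun _ k => k) '' S := by
    rintro d ⟨s, hs, hd⟩
    subst hd
    set A : Set ℕ := {d : ℕ | ∃ I : Fin n →₀ ℕ, (I.sum fun _ k => k) = d ∧
        ‖MvPowerSeries.coeff I f‖ * ∏ i, s i ^ I i = gaussNorm s f} with hA
    have hAsub : A ⊆ (fun I : Fin n →₀ ℕ => I.sum fun _ k => k) '' S := by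
      rintro a ⟨I, hIa, hIatt⟩
      exact ⟨I, ⟨s, hs, hIatt⟩, hIa⟩
    have hAfin : A.Finite := (h1.image _).subset hAsub
    have hAne : A.Nonempty := by
      obtain ⟨I, hI⟩ := exists_attaining hs hf0 hf
      exact ⟨I.sum fun _ k => k, I, rfl, hI⟩
    have : polyOrd s f ∈ A := Nat.sSup_mem hAne hAfin.bddAbove
    exact hAsub this
  exact ((h1.image _).subset hsub)
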